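/- Vanishing of tails of grouped double series used in the proof of Lemma 9: Let a : ℕ × ℕ → G satisfy 0 ≤ a_{ij} for all i, j, and suppose that for some bijection e : ℕ → ℕ × ℕ the series Σ_{k∈ℕ} a_{e(k)} converges. Then the difference Σ_{i≤n} (Σ_{j∈ℕ} a_{ij}) − Σ_{i≤n, j≤n} a_{ij} converges to 0 as n → ∞. -/

import Mathlib

open Filter Topology

/-- A series `Σ_{i∈ℕ} x i` converges to `s` if its partial sums `Σ_{i=0}^{N} x i`
converge to `s` as `N → ∞`. -/
def SeriesConvTo {G : Type*} [AddCommMonoid G] [TopologicalSpace G]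
    (x : ℕ → G) (s : G) : Prop :=
  Tendsto (fun N => ∑ i ∈ Finset.range (N + 1), x i) atTop (𝓝 s)

/-- Vanishing of tails of grouped double series: if `0 ≤ a (i, j)` for all `i, j`,
the series over some enumeration `e` of `ℕ × ℕ` converges, and `t i` is the sum of
the `i`-th row series, then `Σ_{i≤n} t i − Σ_{i≤n, j≤n} a (i, j) → 0` as `n → ∞`. -/
theorem grouped_double_series_tail {G : Type*} [AddCommGroup G] [UniformSpace G]
    [IsUniformAddGroup G] [CompleteSpace G] [T2Space G] [PartialOrder G]
    (hadd : ∀ a b c : G, a ≤ b → a + c ≤ b + c)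
    (hclosed : ∀ (u v : ℕ → G) (lu lv : G), (∀ n, u n ≤ v n) →
      Tendsto u atTop (𝓝 lu) → Tendsto v atTop (𝓝 lv) → lu ≤ lv)
    (hsqueeze : ∀ (u v w : ℕ → G), (∀ n, u n ≤ v n) → (∀ n, v n ≤ w n) →
      Tendsto u atTop (𝓝 (0 : G)) → Tendsto w atTop (𝓝 (0 : G)) →
      Tendsto v atTop (𝓝 (0 : G)))
    (a : ℕ × ℕ → G) (ha : ∀ i j, 0 ≤ a (i, j))
    (e : ℕ → ℕ × ℕ) (he : Function.Bijective e)
    (s : G) (hs : SeriesConvTo (fun k => a (e k)) s)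
    (t : ℕ → G) (ht : ∀ i, SeriesConvTo (fun j => a (i, j)) (t i)) :
    Tendsto (fun n => (∑ i ∈ Finset.range (n + 1), t i) -
      ∑ i ∈ Finset.range (n + 1), ∑ j ∈ Finset.range (n + 1), a (i, j))
      atTop (𝓝 (0 : G)) := by
  classical
  have ha' : ∀ p : ℕ × ℕ, 0 ≤ a p := fun p => by simpa using ha p.1 p.2
  -- basic order helpers
  have hle_iff : ∀ x y : G, x ≤ y ↔ 0 ≤ y - x := by
    intro x y
    constructor
    · intro h
      have := hadd x y (-x) h
      simpa [sub_eq_add_neg] using this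
    · intro h
      have := hadd 0 (y - x) x h
      simpa using this
  have hsum_nonneg : ∀ {α : Type} (F : Finset α) (f : α → G),
      (∀ x ∈ F, 0 ≤ f x) → 0 ≤ ∑ x ∈ F, f x := by
    intro α F f hf
    refine Finset.sum_induction f (fun y => 0 ≤ y) ?_ le_rfl hf
    intro x y hx hy
    have h1 := hadd 0 x y hx
    simp only [zero_add] at h1
    exact le_trans hy h1
  have hsub_sum : ∀ {α : Type} (F F' : Finset α) (f : α → G), F ⊆ F' →
      (∀ x ∈ F', 0 ≤ f x) → ∑ x ∈ F, f x ≤ ∑ x ∈ F', f x := by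
    intro α F F' f hFF hf
    rw [hle_iff, ← Finset.sum_sdiff hFF, add_sub_cancel_right]
    exact hsum_nonneg _ f (fun x hx => hf x (Finset.mem_sdiff.mp hx).1)
  have hsum_le_sum : ∀ {α : Type} (F : Finset α) (f g : α → G),
      (∀ x ∈ F, f x ≤ g x) → ∑ x ∈ F, f x ≤ ∑ x ∈ F, g x := by
    intro α F f g hfg
    rw [hle_iff, ← Finset.sum_sub_distrib]
    exact hsum_nonneg _ _ (fun x hx => (hle_iff _ _).mp (hfg x hx))
  have hsub_right : ∀ x y c : G, x ≤ y → x - c ≤ y - c := by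
    intro x y c h
    rw [hle_iff]
    have := (hle_iff x y).mp h
    convert this using 1
    abel
  have hsub_left : ∀ x y c : G, x ≤ y → c - y ≤ c - x := by
    intro x y c h
    rw [hle_iff]
    have := (hle_iff x y).mp h
    convert this using 1
    abel
  -- partial sums along the enumeration
  set T : ℕ → G := fun N => ∑ k ∈ Finset.range N, a (e k) with hTdef
  have hT : Tendsto T atTop (𝓝 s) := by
    rw [← tendsto_add_atTop_iff_nat 1]
    exact hs
  have hTmono : ∀ N M, N ≤ M → T N ≤ T M := fun N M h =>
    hsub_sum _ _ _ (Finset.range_subset_range.mpr h) (fun x _ => ha' _)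
  have hTle : ∀ N, T N ≤ s := by
    intro N
    refine hclosed (fun _ => T N) (fun k => T (k + N)) (T N) s
      (fun k => hTmono N (k + N) (by omega)) tendsto_const_nhds ?_
    exact hT.comp (tendsto_add_atTop_nat N)
  -- every finite partial sum is ≤ s
  have hrect : ∀ F : Finset (ℕ × ℕ), ∑ p ∈ F, a p ≤ s := by
    intro F
    set E := Equiv.ofBijective e he with hE
    set K := F.sup (fun p => E.symm p) with hK
    have hsubset : F ⊆ (Finset.range (K + 1)).image e := by
      intro p hp
      refine Finset.mem_image.mpr ⟨E.symm p, ?_, ?_⟩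
      · exact Finset.mem_range.mpr (Nat.lt_succ_of_le (Finset.le_sup hp))
      · exact E.apply_symm_apply p
    calc ∑ p ∈ F, a p ≤ ∑ p ∈ (Finset.range (K + 1)).image e, a p :=
          hsub_sum _ _ _ hsubset (fun p _ => ha' p)
      _ = T (K + 1) := Finset.sum_image (fun x _ y _ h => he.1 h)
      _ ≤ s := hTle _
  -- row partial sums are below the row sums
  have hrow : ∀ i n, (∑ j ∈ Finset.range (n + 1), a (i, j)) ≤ t i := by
    intro i n
    refine hclosed (fun _ => ∑ j ∈ Finset.range (n + 1), a (i, j))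
      (fun k => ∑ j ∈ Finset.range (k + n + 1), a (i, j)) _ (t i)
      (fun k => hsub_sum _ _ _ (Finset.range_subset_range.mpr (by omega)) (fun j _ => ha i j))
      tendsto_const_nhds ((ht i).comp (tendsto_add_atTop_nat n))
  -- partial sums of row sums are ≤ s
  have hrowsum : ∀ n, (∑ i ∈ Finset.range (n + 1), t i) ≤ s := by
    intro n
    refine hclosed (fun M => ∑ i ∈ Finset.range (n + 1), ∑ j ∈ Finset.range (M + 1), a (i, j))
      (fun _ => s) _ s ?_ ?_ tendsto_const_nhds
    · intro M
      show (∑ i ∈ Finset.range (n + 1), ∑ j ∈ Finset.range (M + 1), a (i, j)) ≤ s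
      rw [← Finset.sum_product]
      exact hrect _
    · exact tendsto_finset_sum _ (fun i _ => ht i)
  -- the square sums and the difference
  set Q : ℕ → G := fun n => ∑ i ∈ Finset.range (n + 1), ∑ j ∈ Finset.range (n + 1), a (i, j)
    with hQdef
  have hQprod : ∀ n, Q n = ∑ p ∈ Finset.range (n + 1) ×ˢ Finset.range (n + 1), a p := by
    intro n
    rw [hQdef, Finset.sum_product]
  -- the filter of indices whose image lies in the square
  set F : ℕ → Finset ℕ := fun n =>
    (Finset.range (n + 1)).filter (fun k => (e k).1 ≤ n ∧ (e k).2 ≤ n) with hFdef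
  have hFex : ∀ n : ℕ, ∃ k, k ∉ F n := by
    intro n
    refine ⟨n + 1, fun h => ?_⟩
    have := (Finset.mem_filter.mp h).1
    simp at this
  set m : ℕ → ℕ := fun n => Nat.find (hFex n) with hmdef
  have hrangeF : ∀ n, Finset.range (m n) ⊆ F n := by
    intro n k hk
    have hk' : k < m n := Finset.mem_range.mp hk
    have := Nat.find_min (hFex n) hk'
    exact not_not.mp this
  have hTQ : ∀ n, T (m n) ≤ Q n := by
    intro n
    have h1 : T (m n) ≤ ∑ k ∈ F n, a (e k) :=
      hsub_sum _ _ _ (hrangeF n) (fun x _ => ha' _)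
    have h2 : (∑ k ∈ F n, a (e k)) = ∑ p ∈ (F n).image e, a p :=
      (Finset.sum_image (fun x _ y _ h => he.1 h)).symm
    have h3 : (F n).image e ⊆ Finset.range (n + 1) ×ˢ Finset.range (n + 1) := by
      intro p hp
      obtain ⟨k, hk, rfl⟩ := Finset.mem_image.mp hp
      obtain ⟨-, h1, h2⟩ := Finset.mem_filter.mp hk
      exact Finset.mem_product.mpr ⟨Finset.mem_range.mpr (by omega),
        Finset.mem_range.mpr (by omega)⟩
    have h4 : (∑ p ∈ (F n).image e, a p) ≤ Q n := by
      rw [hQprod]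
      exact hsub_sum _ _ _ h3 (fun p _ => ha' p)
    rw [h2] at h1
    exact le_trans h1 h4
  have hm : Tendsto m atTop atTop := by
    refine tendsto_atTop.mpr (fun K => ?_)
    refine eventually_atTop.mpr
      ⟨(Finset.range K).sup (fun k => max k (max (e k).1 (e k).2)), fun n hn => ?_⟩
    rw [hmdef]
    refine (Nat.le_find_iff _ _).mpr (fun k hk hnot => ?_)
    apply hnot
    have hle : max k (max (e k).1 (e k).2) ≤ n :=
      le_trans (Finset.le_sup (f := fun k => max k (max (e k).1 (e k).2))
        (Finset.mem_range.mpr hk)) hn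
    refine Finset.mem_filter.mpr ⟨Finset.mem_range.mpr (by omega), by omega, by omega⟩
  -- squeeze
  have hD0 : ∀ n, 0 ≤ (∑ i ∈ Finset.range (n + 1), t i) - Q n := by
    intro n
    rw [← hle_iff]
    exact hsum_le_sum _ _ _ (fun i _ => hrow i n)
  have hDle : ∀ n, (∑ i ∈ Finset.range (n + 1), t i) - Q n ≤ s - T (m n) := by
    intro n
    exact le_trans (hsub_right _ _ _ (hrowsum n)) (hsub_left _ _ _ (hTQ n))
  have hw : Tendsto (fun n => s - T (m n)) atTop (𝓝 0) := by
    have h0 : Tendsto (fun N => s - T N) atTop (𝓝 0) := by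
      have := (tendsto_const_nhds (x := s) (f := atTop)).sub hT
      simpa using this
    exact h0.comp hm
  exact hsqueeze (fun _ => 0) _ (fun n => s - T (m n)) hD0 hDle tendsto_const_nhds hw
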